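/- Let p be a probability vector on k states, M a k×m matrix with positive entries, and ρ ∈ (0,1). Define for r in the probability simplex Δ_{k-1} and b ∈ Δ^{m-1} the function J(r,b) = (ρ/(1−ρ))·D_KL(r‖p̃) + D_KL(r‖q̄_b), where q̄_b is the normalized wealth law induced by M and b, and p̃ is the 1/ρ-tilt of p. Suppose b^{(t)} ∈ Δ^{m-1}, r^{(t)} = argmin_r J(r, b^{(t)}), and b^{(t+1)} satisfies f_{r^{(t)}}(b^{(t+1)}) ≤ f_{r^{(t)}}(b^{(t)}), where f_r(b) = −Σ_j r_j log(Mb)_j. Then D_ρ(p̃ ‖ q̄_{b^{(t+1)}}) ≤ D_ρ(p̃ ‖ q̄_{b^{(t)}}). -/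

import Mathlib

open Finset

/-- Gibbs' inequality for an unnormalized positive weight vector. -/
lemma gibbs_aux {k : ℕ} (r w : Fin k → ℝ) (hr0 : ∀ j, 0 ≤ r j) (hr1 : ∑ j, r j = 1)
    (hw : ∀ j, 0 < w j) :
    -Real.log (∑ j, w j) ≤ ∑ j, r j * Real.log (r j / w j) := by
  have hk : 0 < k := by
    rcases Nat.eq_zero_or_pos k with h | h
    · exfalso; subst h; simpa using hr1
    · exact h
  set Z := ∑ j, w j with hZ
  have hZ0 : 0 < Z := Finset.sum_pos (fun j _ => hw j) ⟨⟨0, hk⟩, mem_univ _⟩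
  have key : ∀ j, r j * Real.log (w j / (Z * r j)) ≤ w j / Z - r j := by
    intro j
    rcases eq_or_lt_of_le (hr0 j) with h | h
    · rw [← h]; simpa using div_nonneg (hw j).le hZ0.le
    · have hpos : 0 < w j / (Z * r j) := div_pos (hw j) (mul_pos hZ0 h)
      have hlog := Real.log_le_sub_one_of_pos hpos
      calc r j * Real.log (w j / (Z * r j)) ≤ r j * (w j / (Z * r j) - 1) :=
            mul_le_mul_of_nonneg_left hlog (hr0 j)
        _ = w j / Z - r j := by field_simp
  have hsum : ∑ j, r j * Real.log (w j / (Z * r j)) ≤ 0 := by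
    calc ∑ j, r j * Real.log (w j / (Z * r j)) ≤ ∑ j, (w j / Z - r j) :=
          Finset.sum_le_sum fun j _ => key j
      _ = 0 := by
          rw [Finset.sum_sub_distrib, ← Finset.sum_div, hr1]
          field_simp
          rw [hZ]; ring
  have expand : ∀ j, r j * Real.log (w j / (Z * r j))
      = -(r j * Real.log (r j / w j)) - r j * Real.log Z := by
    intro j
    rcases eq_or_lt_of_le (hr0 j) with h | h
    · rw [← h]; ring
    · rw [Real.log_div (hw j).ne' (mul_pos hZ0 h).ne', Real.log_mul hZ0.ne' h.ne',
        Real.log_div h.ne' (hw j).ne']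
      ring
  rw [Finset.sum_congr rfl fun j _ => expand j] at hsum
  rw [Finset.sum_sub_distrib, ← Finset.sum_mul, hr1, one_mul] at hsum
  have : ∑ j, -(r j * Real.log (r j / w j)) = -∑ j, r j * Real.log (r j / w j) := by
    simp
  rw [this] at hsum
  linarith

/-- Pointwise algebraic identity combining the two KL integrands into one. -/
lemma point_aux (ρ r pt q : ℝ) (hρ1 : ρ ≠ 1) (hr : 0 ≤ r) (hpt : 0 < pt) (hq : 0 < q) :
    (ρ/(1-ρ)) * (r * Real.log (r / pt)) + r * Real.log (r / q)
      = (1/(1-ρ)) * (r * Real.log (r / (pt ^ ρ * q ^ (1-ρ)))) := by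
  rcases eq_or_lt_of_le hr with h | h
  · rw [← h]; ring
  · have hptp : 0 < pt ^ ρ := Real.rpow_pos_of_pos hpt _
    have hqp : 0 < q ^ (1-ρ) := Real.rpow_pos_of_pos hq _
    have hw : 0 < pt ^ ρ * q ^ (1-ρ) := mul_pos hptp hqp
    rw [Real.log_div h.ne' hpt.ne', Real.log_div h.ne' hq.ne',
      Real.log_div h.ne' hw.ne', Real.log_mul hptp.ne' hqp.ne',
      Real.log_rpow hpt, Real.log_rpow hq]
    have h1 : (1:ℝ) - ρ ≠ 0 := sub_ne_zero.mpr (Ne.symm hρ1)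
    field_simp
    ring

theorem stmt_12 {k m : ℕ} (M : Matrix (Fin k) (Fin m) ℝ) (p : Fin k → ℝ)
    (ρ γ : ℝ)
    (hM : ∀ j i, 0 < M j i) (hp : ∀ j, 0 < p j) (hp1 : ∑ j, p j = 1)
    (hρ : ρ ∈ Set.Ioo (0:ℝ) 1)
    (hγ : ∀ i, ∑ j, M j i = γ)
    (ptilde : Fin k → ℝ) (hpt : ptilde = fun j => p j ^ (1/ρ) / ∑ l, p l ^ (1/ρ))
    (qbar : (Fin m → ℝ) → Fin k → ℝ)
    (hqb : qbar = fun b j => M.mulVec b j / ∑ l, M.mulVec b l)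
    (J : (Fin k → ℝ) → (Fin m → ℝ) → ℝ)
    (hJ : J = fun r b => (ρ/(1-ρ)) * (∑ j, r j * Real.log (r j / ptilde j))
        + ∑ j, r j * Real.log (r j / qbar b j))
    (f : (Fin k → ℝ) → (Fin m → ℝ) → ℝ)
    (hf : f = fun r b => -∑ j, r j * Real.log (M.mulVec b j))
    (bt bt1 : Fin m → ℝ)
    (hbt : (∀ i, 0 ≤ bt i) ∧ ∑ i, bt i = 1)
    (hbt1 : (∀ i, 0 ≤ bt1 i) ∧ ∑ i, bt1 i = 1)
    (rt : Fin k → ℝ) (hrt0 : ∀ j, 0 ≤ rt j) (hrt1 : ∑ j, rt j = 1)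
    (hrmin : ∀ r : Fin k → ℝ, (∀ j, 0 ≤ r j) → (∑ j, r j = 1) → J rt bt ≤ J r bt)
    (hdesc : f rt bt1 ≤ f rt bt) :
    (1/(ρ-1)) * Real.log (∑ j, ptilde j ^ ρ * qbar bt1 j ^ (1-ρ)) ≤
      (1/(ρ-1)) * Real.log (∑ j, ptilde j ^ ρ * qbar bt j ^ (1-ρ)) := by
  obtain ⟨hρ0, hρ1⟩ := hρ
  obtain ⟨hbt0, hbts⟩ := hbt
  obtain ⟨hbt10, hbt1s⟩ := hbt1
  by_cases hk : k = 0
  · subst hk; simp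
  have hk0 : 0 < k := Nat.pos_of_ne_zero hk
  have hm0 : 0 < m := by
    rcases Nat.eq_zero_or_pos m with h | h
    · exfalso; subst h; simpa using hbts
    · exact h
  have h1ρ : (0:ℝ) < 1 - ρ := by linarith
  have h1ρ' : (1:ℝ) - ρ ≠ 0 := h1ρ.ne'
  have hρm1 : ρ - 1 ≠ 0 := by intro h; apply h1ρ'; linarith
  -- rewriting helpers
  have hptj : ∀ j, ptilde j = p j ^ (1/ρ) / ∑ l, p l ^ (1/ρ) := by intro j; rw [hpt]
  have hqbj : ∀ b j, qbar b j = M.mulVec b j / ∑ l, M.mulVec b l := by intro b j; rw [hqb]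
  have hJ' : ∀ r b, J r b = (ρ/(1-ρ)) * (∑ j, r j * Real.log (r j / ptilde j))
      + ∑ j, r j * Real.log (r j / qbar b j) := by intro r b; rw [hJ]
  have hf' : ∀ r b, f r b = -∑ j, r j * Real.log (M.mulVec b j) := by intro r b; rw [hf]
  -- positivity facts
  have hγ0 : 0 < γ := by
    rw [← hγ ⟨0, hm0⟩]
    exact Finset.sum_pos (fun j _ => hM j _) ⟨⟨0, hk0⟩, mem_univ _⟩
  have hSp : 0 < ∑ l, p l ^ (1/ρ) :=
    Finset.sum_pos (fun l _ => Real.rpow_pos_of_pos (hp l) _) ⟨⟨0, hk0⟩, mem_univ _⟩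
  have hptpos : ∀ j, 0 < ptilde j := by
    intro j; rw [hptj j]; exact div_pos (Real.rpow_pos_of_pos (hp j) _) hSp
  have mvpos : ∀ b : Fin m → ℝ, (∀ i, 0 ≤ b i) → (∑ i, b i = 1) → ∀ j, 0 < M.mulVec b j := by
    intro b hb0 hb1 j
    have hex : ∃ i, 0 < b i := by
      by_contra h
      push_neg at h
      have : ∑ i, b i ≤ 0 := Finset.sum_nonpos fun i _ => h i
      linarith
    obtain ⟨i, hi⟩ := hex
    show 0 < ∑ i, M j i * b i
    exact Finset.sum_pos' (fun i _ => mul_nonneg (hM j i).le (hb0 i))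
      ⟨i, mem_univ i, mul_pos (hM j i) hi⟩
  have mvsum : ∀ b : Fin m → ℝ, (∑ i, b i = 1) → ∑ j, M.mulVec b j = γ := by
    intro b hb1
    have h0 : ∑ j, M.mulVec b j = ∑ j, ∑ i, M j i * b i := rfl
    rw [h0, Finset.sum_comm]
    calc ∑ i, ∑ j, M j i * b i = ∑ i, γ * b i := by
          refine Finset.sum_congr rfl fun i _ => ?_
          rw [← Finset.sum_mul, hγ i]
      _ = γ := by rw [← Finset.mul_sum, hb1, mul_one]
  have hqγ : ∀ b : Fin m → ℝ, (∑ i, b i = 1) → ∀ j, qbar b j = M.mulVec b j / γ := by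
    intro b hb1 j; rw [hqbj, mvsum b hb1]
  have qpos : ∀ b : Fin m → ℝ, (∀ i, 0 ≤ b i) → (∑ i, b i = 1) → ∀ j, 0 < qbar b j := by
    intro b hb0 hb1 j
    rw [hqγ b hb1 j]
    exact div_pos (mvpos b hb0 hb1 j) hγ0
  have hqt := qpos bt hbt0 hbts
  have hqt1 := qpos bt1 hbt10 hbt1s
  -- J identity
  have Jid : ∀ (r : Fin k → ℝ) (b : Fin m → ℝ), (∀ j, 0 ≤ r j) → (∀ j, 0 < qbar b j) →
      J r b = (1/(1-ρ)) * ∑ j, r j * Real.log (r j / (ptilde j ^ ρ * qbar b j ^ (1-ρ))) := by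
    intro r b hr hq
    rw [hJ', Finset.mul_sum, Finset.mul_sum, ← Finset.sum_add_distrib]
    exact Finset.sum_congr rfl fun j _ =>
      point_aux ρ (r j) (ptilde j) (qbar b j) hρ1.ne (hr j) (hptpos j) (hq j)
  -- Gibbs lower bound : Rényi divergence ≤ J r b
  have gibbs : ∀ (r : Fin k → ℝ) (b : Fin m → ℝ), (∀ j, 0 ≤ r j) → (∑ j, r j = 1) →
      (∀ j, 0 < qbar b j) →
      (1/(ρ-1)) * Real.log (∑ j, ptilde j ^ ρ * qbar b j ^ (1-ρ)) ≤ J r b := by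
    intro r b hr0 hr1 hq
    rw [Jid r b hr0 hq]
    have hw : ∀ j, 0 < ptilde j ^ ρ * qbar b j ^ (1-ρ) := fun j =>
      mul_pos (Real.rpow_pos_of_pos (hptpos j) _) (Real.rpow_pos_of_pos (hq j) _)
    have hg := gibbs_aux r _ hr0 hr1 hw
    have e : (1/(ρ-1)) * Real.log (∑ j, ptilde j ^ ρ * qbar b j ^ (1-ρ))
        = (1/(1-ρ)) * (-(Real.log (∑ j, ptilde j ^ ρ * qbar b j ^ (1-ρ)))) := by
      field_simp
      ring
    rw [e]
    exact mul_le_mul_of_nonneg_left hg (by positivity)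
  -- equality at the minimizer r*
  set Zt := ∑ j, ptilde j ^ ρ * qbar bt j ^ (1-ρ) with hZt
  have hwt : ∀ j, 0 < ptilde j ^ ρ * qbar bt j ^ (1-ρ) := fun j =>
    mul_pos (Real.rpow_pos_of_pos (hptpos j) _) (Real.rpow_pos_of_pos (hqt j) _)
  have hZt0 : 0 < Zt := Finset.sum_pos (fun j _ => hwt j) ⟨⟨0, hk0⟩, mem_univ _⟩
  set rstar : Fin k → ℝ := fun j => (ptilde j ^ ρ * qbar bt j ^ (1-ρ)) / Zt with hrstar
  have hrs0 : ∀ j, 0 ≤ rstar j := fun j => (div_pos (hwt j) hZt0).le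
  have hrs1 : ∑ j, rstar j = 1 := by
    rw [hrstar]
    simp only
    rw [← Finset.sum_div, ← hZt, div_self hZt0.ne']
  have Jstar : J rstar bt = (1/(ρ-1)) * Real.log Zt := by
    rw [Jid rstar bt hrs0 hqt]
    have e1 : ∀ j, rstar j * Real.log (rstar j / (ptilde j ^ ρ * qbar bt j ^ (1-ρ)))
        = rstar j * (-Real.log Zt) := by
      intro j
      congr 1
      have e2 : rstar j / (ptilde j ^ ρ * qbar bt j ^ (1-ρ)) = Zt⁻¹ := by
        have hr : rstar j = (ptilde j ^ ρ * qbar bt j ^ (1-ρ)) / Zt := rfl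
        rw [hr, div_div, mul_comm Zt, ← div_div, div_self (hwt j).ne', one_div]
      rw [e2, Real.log_inv]
    rw [Finset.sum_congr rfl fun j _ => e1 j, ← Finset.sum_mul, hrs1, one_mul]
    field_simp
    ring
  -- transfer : J r b depends on b only through f r b
  have trans : ∀ (r : Fin k → ℝ) (b : Fin m → ℝ), (∀ j, 0 ≤ r j) → (∑ j, r j = 1) →
      (∀ i, 0 ≤ b i) → (∑ i, b i = 1) →
      ∑ j, r j * Real.log (r j / qbar b j)
        = (∑ j, r j * Real.log (r j)) + f r b + Real.log γ := by
    intro r b hr0 hr1 hb0 hb1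
    rw [hf']
    have e1 : ∀ j, r j * Real.log (r j / qbar b j)
        = r j * Real.log (r j) - r j * Real.log (M.mulVec b j) + r j * Real.log γ := by
      intro j
      rcases eq_or_lt_of_le (hr0 j) with h | h
      · rw [← h]; ring
      · rw [hqγ b hb1 j, Real.log_div h.ne' (div_pos (mvpos b hb0 hb1 j) hγ0).ne',
          Real.log_div (mvpos b hb0 hb1 j).ne' hγ0.ne']
        ring
    rw [Finset.sum_congr rfl fun j _ => e1 j]
    rw [Finset.sum_add_distrib, Finset.sum_sub_distrib, ← Finset.sum_mul, hr1, one_mul]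
    ring
  have step2 : J rt bt1 ≤ J rt bt := by
    rw [hJ', hJ', trans rt bt1 hrt0 hrt1 hbt10 hbt1s, trans rt bt hrt0 hrt1 hbt0 hbts]
    linarith
  calc (1/(ρ-1)) * Real.log (∑ j, ptilde j ^ ρ * qbar bt1 j ^ (1-ρ))
      ≤ J rt bt1 := gibbs rt bt1 hrt0 hrt1 hqt1
    _ ≤ J rt bt := step2
    _ ≤ J rstar bt := hrmin rstar hrs0 hrs1
    _ = (1/(ρ-1)) * Real.log Zt := Jstar
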